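/- Let r ≥ 1. If E is a continuous function on the standard simplex σ = { u ∈ ℝ^k : u_i ≥ 0, Σ u_i ≤ 1 }, C^1 in the interior, and satisfies E + (1/r) Σ_{i=1}^k u_i ∂E/∂u_i = 0 in the interior, then E ≡ 0. Consequently the solution of E + (1/r) Σ u_i ∂E/∂u_i = B with E continuous is unique. -/

import Mathlib

open scoped BigOperators
open Set

/-- The standard closed simplex `{ u ∈ ℝ^k : u_i ≥ 0, Σ u_i ≤ 1 }`. -/
def stdSimplex' (k : ℕ) : Set (Fin k → ℝ) :=
  {u | (∀ i, 0 ≤ u i) ∧ ∑ i, u i ≤ 1}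

namespace IntUniqAux

lemma convex_std (k : ℕ) : Convex ℝ (stdSimplex' k) := by
  intro u hu v hv a b ha hb hab
  refine ⟨fun i => ?_, ?_⟩
  · have := hu.1 i; have := hv.1 i
    have : 0 ≤ a * u i + b * v i := by positivity
    simpa [Pi.add_apply, Pi.smul_apply, smul_eq_mul] using this
  · have : ∑ i, (a * u i + b * v i) ≤ a * 1 + b * 1 := by
      rw [Finset.sum_add_distrib, ← Finset.mul_sum, ← Finset.mul_sum]
      gcongr
      exacts [hu.2, hv.2]
    simpa [Pi.add_apply, Pi.smul_apply, smul_eq_mul, hab] using this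

lemma zero_mem (k : ℕ) : (0 : Fin k → ℝ) ∈ stdSimplex' k := by
  constructor <;> simp

lemma smul_mem {k : ℕ} {u : Fin k → ℝ} (hu : u ∈ stdSimplex' k) {t : ℝ}
    (ht0 : 0 ≤ t) (ht1 : t ≤ 1) : t • u ∈ stdSimplex' k := by
  refine ⟨fun i => mul_nonneg ht0 (hu.1 i), ?_⟩
  have : ∑ i, t * u i = t * ∑ i, u i := by rw [Finset.mul_sum]
  calc ∑ i, (t • u) i = t * ∑ i, u i := by simpa [smul_eq_mul] using this
    _ ≤ 1 := mul_le_one₀ ht1 (Finset.sum_nonneg fun i _ => hu.1 i) hu.2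

lemma smul_mem_interior {k : ℕ} {u : Fin k → ℝ} (hu : u ∈ interior (stdSimplex' k)) {t : ℝ}
    (ht0 : 0 < t) (ht1 : t ≤ 1) : t • u ∈ interior (stdSimplex' k) := by
  have h := (convex_std k).combo_interior_closure_mem_interior hu
    (subset_closure (zero_mem k)) ht0 (by linarith : (0:ℝ) ≤ 1 - t) (by ring)
  simpa using h

lemma clm_apply_eq_sum {k : ℕ} (f : (Fin k → ℝ) →L[ℝ] ℝ) (u : Fin k → ℝ) :
    f u = ∑ i, u i * f (Pi.single i 1) := by
  conv_lhs => rw [← Finset.univ_sum_single u]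
  rw [map_sum]
  refine Finset.sum_congr rfl fun i _ => ?_
  rw [show Pi.single i (u i) = u i • (Pi.single i 1 : Fin k → ℝ) by
    rw [← Pi.single_smul]; simp]
  simp

lemma core (k r : ℕ) (hr : 1 ≤ r) (E : (Fin k → ℝ) → ℝ)
    (hcont : ContinuousOn E (stdSimplex' k))
    (hC1 : ContDiffOn ℝ 1 E (interior (stdSimplex' k)))
    (hPDE : ∀ u ∈ interior (stdSimplex' k),
      E u + (r : ℝ)⁻¹ * ∑ i, u i * fderiv ℝ E u (Pi.single i 1) = 0)
    {u : Fin k → ℝ} (hu : u ∈ interior (stdSimplex' k)) : E u = 0 := by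
  set g : ℝ → ℝ := fun t => t ^ r * E (t • u) with hg
  have hrR : (0:ℝ) < r := by exact_mod_cast hr
  -- g is continuous on [0,1]
  have hmaps : MapsTo (fun t : ℝ => t • u) (Icc (0:ℝ) 1) (stdSimplex' k) := by
    intro t ht
    exact smul_mem (interior_subset hu) ht.1 ht.2
  have hgc : ContinuousOn g (Icc (0:ℝ) 1) := by
    apply ContinuousOn.mul (by fun_prop)
    exact hcont.comp (by fun_prop) hmaps
  -- g has derivative 0 on (0,1)
  have hderiv : ∀ t ∈ Ioo (0:ℝ) 1, HasDerivAt g 0 t := by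
    intro t ht
    have htu : t • u ∈ interior (stdSimplex' k) := smul_mem_interior hu ht.1 ht.2.le
    have hdiff : DifferentiableAt ℝ E (t • u) :=
      (hC1.contDiffAt (isOpen_interior.mem_nhds htu)).differentiableAt one_ne_zero
    have hline : HasDerivAt (fun s : ℝ => E (s • u)) (fderiv ℝ E (t • u) u) t := by
      have h1 : HasDerivAt (fun s : ℝ => s • u) u t := by
        simpa using (hasDerivAt_id t).smul_const u
      exact (hdiff.hasFDerivAt.comp_hasDerivAt t h1)
    have h2 : HasDerivAt (fun s : ℝ => s ^ r) ((r:ℝ) * t ^ (r - 1)) t := hasDerivAt_pow r t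
    have := h2.mul hline
    -- now compute the value
    have hval : (r:ℝ) * t ^ (r - 1) * E (t • u) + t ^ r * fderiv ℝ E (t • u) u = 0 := by
      have hpde := hPDE (t • u) htu
      have hsum : ∑ i, (t • u) i * fderiv ℝ E (t • u) (Pi.single i 1)
          = t * fderiv ℝ E (t • u) u := by
        rw [clm_apply_eq_sum (fderiv ℝ E (t • u)) u, Finset.mul_sum]
        refine Finset.sum_congr rfl fun i _ => by simp [smul_eq_mul]; ring
      rw [hsum] at hpde
      -- E(tu) = - r⁻¹ * t * D
      have htpow : t ^ r = t * t ^ (r - 1) := by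
        conv_lhs => rw [show r = 1 + (r - 1) by omega]
        rw [pow_add, pow_one]
      have hE : E (t • u) = -(r:ℝ)⁻¹ * (t * fderiv ℝ E (t • u) u) := by linarith
      rw [hE, htpow]
      field_simp
      ring
    rw [← hval]; exact this
  -- conclude g ε = g 1 for ε ∈ (0,1)
  have key : ∀ ε ∈ Ioo (0:ℝ) 1, g 1 = g ε := by
    intro ε hε
    have := constant_of_has_deriv_right_zero (f := g) (a := ε) (b := 1)
      (hgc.mono (Icc_subset_Icc hε.1.le le_rfl))
      (fun x hx => (hderiv x ⟨lt_of_lt_of_le hε.1 hx.1, hx.2⟩).hasDerivWithinAt)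
    exact this 1 ⟨hε.2.le, le_rfl⟩
  -- take limit ε → 0⁺
  have hg0 : g 0 = 0 := by
    simp [hg, zero_pow (by omega : r ≠ 0)]
  have hlim : Filter.Tendsto g (nhdsWithin 0 (Ioo (0:ℝ) 1)) (nhds 0) := by
    have h := (hgc 0 ⟨le_rfl, zero_le_one⟩).tendsto
    rw [hg0] at h
    exact h.mono_left (nhdsWithin_mono _ Ioo_subset_Icc_self)
  have hne : (nhdsWithin (0:ℝ) (Ioo 0 1)).NeBot := by
    apply IsGLB.nhdsWithin_neBot (isGLB_Ioo zero_lt_one) (nonempty_Ioo.2 zero_lt_one)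
  have hconst : Filter.Tendsto g (nhdsWithin 0 (Ioo (0:ℝ) 1)) (nhds (g 1)) := by
    apply Filter.Tendsto.congr' _ tendsto_const_nhds
    filter_upwards [self_mem_nhdsWithin] with ε hε
    exact key ε hε
  have : g 1 = 0 := tendsto_nhds_unique hconst hlim
  simpa [hg] using this

lemma interior_nonempty (k : ℕ) (hk : 0 < k) :
    (fun _ : Fin k => (1:ℝ) / (2 * k)) ∈ interior (stdSimplex' k) := by
  set c : Fin k → ℝ := fun _ => (1:ℝ) / (2 * k) with hc
  have hkR : (0:ℝ) < k := by exact_mod_cast hk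
  refine mem_interior.2 ⟨Metric.ball c (1 / (4 * k)), ?_, Metric.isOpen_ball,
    Metric.mem_ball_self (by positivity)⟩
  intro v hv
  have hdist : ∀ i, |v i - c i| < 1 / (4 * k) := fun i =>
    lt_of_le_of_lt (by simpa [Real.dist_eq] using dist_le_pi_dist v c i) hv
  constructor
  · intro i
    have h := abs_lt.1 (hdist i)
    have : c i - 1 / (4 * k) < v i := by linarith [h.1]
    have hci : c i = 1 / (2 * (k:ℝ)) := rfl
    rw [hci] at this
    have heq : (1:ℝ) / (2 * k) - 1 / (4 * k) = 1 / (4 * k) := by field_simp; ring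
    have hpos : (0:ℝ) < 1 / (4 * k) := by positivity
    linarith
  · have hlt : ∀ i, v i < c i + 1 / (4 * (k:ℝ)) := fun i => by
      linarith [(abs_lt.1 (hdist i)).2]
    have hval : ((k:ℝ)) * (1 / (2 * (k:ℝ)) + 1 / (4 * (k:ℝ))) = 3 / 4 := by
      field_simp; ring
    calc ∑ i, v i ≤ ∑ i, (c i + 1 / (4 * (k:ℝ))) :=
          Finset.sum_le_sum fun i _ => (hlt i).le
      _ = (k:ℝ) * (1 / (2 * (k:ℝ)) + 1 / (4 * (k:ℝ))) := by
          simp [hc, Finset.sum_const, Finset.card_univ, nsmul_eq_mul]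
          ring
      _ ≤ 1 := by rw [hval]; norm_num

lemma main (k r : ℕ) (hr : 1 ≤ r) (E : (Fin k → ℝ) → ℝ)
    (hcont : ContinuousOn E (stdSimplex' k))
    (hC1 : ContDiffOn ℝ 1 E (interior (stdSimplex' k)))
    (hPDE : ∀ u ∈ interior (stdSimplex' k),
      E u + (r : ℝ)⁻¹ * ∑ i, u i * fderiv ℝ E u (Pi.single i 1) = 0) :
    ∀ u ∈ stdSimplex' k, E u = 0 := by
  intro u hu
  rcases Nat.eq_zero_or_pos k with hk | hk
  · -- k = 0 : the simplex is everything
    subst hk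
    have huniv : stdSimplex' 0 = univ := by
      ext v; simp [stdSimplex']
    have : u ∈ interior (stdSimplex' 0) := by rw [huniv, interior_univ]; trivial
    exact core 0 r hr E hcont hC1 hPDE this
  · -- k > 0 : approach u along segment from an interior point
    set c : Fin k → ℝ := fun _ => (1:ℝ) / (2 * k) with hcdef
    have hcint : c ∈ interior (stdSimplex' k) := interior_nonempty k hk
    have hseg : ∀ t ∈ Ioo (0:ℝ) 1, t • c + (1 - t) • u ∈ interior (stdSimplex' k) :=
      fun t ht => (convex_std k).combo_interior_closure_mem_interior hcint
        (subset_closure hu) ht.1 (by linarith [ht.2]) (by ring)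
    have hEzero : ∀ t ∈ Ioo (0:ℝ) 1, E (t • c + (1 - t) • u) = 0 :=
      fun t ht => core k r hr E hcont hC1 hPDE (hseg t ht)
    -- limit as t → 0⁺
    have hpath : Filter.Tendsto (fun t : ℝ => t • c + (1 - t) • u)
        (nhdsWithin 0 (Ioo (0:ℝ) 1)) (nhdsWithin u (stdSimplex' k)) := by
      have hcf : Continuous (fun t : ℝ => t • c + (1 - t) • u) := by continuity
      have h1 : Filter.Tendsto (fun t : ℝ => t • c + (1 - t) • u)
          (nhdsWithin 0 (Ioo (0:ℝ) 1)) (nhds u) :=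
        (hcf.tendsto' 0 u (by simp)).mono_left nhdsWithin_le_nhds
      have h2 : Filter.Tendsto (fun t : ℝ => t • c + (1 - t) • u)
          (nhdsWithin 0 (Ioo (0:ℝ) 1)) (Filter.principal (stdSimplex' k)) := by
        rw [Filter.tendsto_principal]
        filter_upwards [self_mem_nhdsWithin] with t ht
        exact interior_subset (hseg t ht)
      rw [tendsto_nhdsWithin_iff]
      refine ⟨h1, ?_⟩
      filter_upwards [self_mem_nhdsWithin] with t ht
      exact interior_subset (hseg t ht)
    have hlim : Filter.Tendsto (fun t : ℝ => E (t • c + (1 - t) • u))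
        (nhdsWithin 0 (Ioo (0:ℝ) 1)) (nhds (E u)) :=
      ((hcont u hu).tendsto).comp hpath
    have hne : (nhdsWithin (0:ℝ) (Ioo 0 1)).NeBot :=
      IsGLB.nhdsWithin_neBot (isGLB_Ioo zero_lt_one) (nonempty_Ioo.2 zero_lt_one)
    have hconst : Filter.Tendsto (fun t : ℝ => E (t • c + (1 - t) • u))
        (nhdsWithin 0 (Ioo (0:ℝ) 1)) (nhds 0) := by
      apply Filter.Tendsto.congr' _ tendsto_const_nhds
      filter_upwards [self_mem_nhdsWithin] with t ht
      exact (hEzero t ht).symm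
    exact tendsto_nhds_unique hlim hconst

end IntUniqAux

theorem integration_uniqueness (k r : ℕ) (hr : 1 ≤ r) :
    (∀ E : (Fin k → ℝ) → ℝ,
      ContinuousOn E (stdSimplex' k) →
      ContDiffOn ℝ 1 E (interior (stdSimplex' k)) →
      (∀ u ∈ interior (stdSimplex' k),
        E u + (r : ℝ)⁻¹ * ∑ i, u i * fderiv ℝ E u (Pi.single i 1) = 0) →
      ∀ u ∈ stdSimplex' k, E u = 0) ∧
    ∀ B E₁ E₂ : (Fin k → ℝ) → ℝ,
      ContinuousOn E₁ (stdSimplex' k) → ContinuousOn E₂ (stdSimplex' k) →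
      ContDiffOn ℝ 1 E₁ (interior (stdSimplex' k)) →
      ContDiffOn ℝ 1 E₂ (interior (stdSimplex' k)) →
      (∀ u ∈ interior (stdSimplex' k),
        E₁ u + (r : ℝ)⁻¹ * ∑ i, u i * fderiv ℝ E₁ u (Pi.single i 1) = B u) →
      (∀ u ∈ interior (stdSimplex' k),
        E₂ u + (r : ℝ)⁻¹ * ∑ i, u i * fderiv ℝ E₂ u (Pi.single i 1) = B u) →
      ∀ u ∈ stdSimplex' k, E₁ u = E₂ u := by
  constructor
  · exact fun E hc hC hP => IntUniqAux.main k r hr E hc hC hP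
  · intro B E₁ E₂ hc1 hc2 hC1 hC2 hP1 hP2 u hu
    have hmain := IntUniqAux.main k r hr (E₁ - E₂) (hc1.sub hc2) (hC1.sub hC2) ?_ u hu
    · simpa [sub_eq_zero] using hmain
    · intro v hv
      have hd1 : DifferentiableAt ℝ E₁ v :=
        (hC1.contDiffAt (isOpen_interior.mem_nhds hv)).differentiableAt one_ne_zero
      have hd2 : DifferentiableAt ℝ E₂ v :=
        (hC2.contDiffAt (isOpen_interior.mem_nhds hv)).differentiableAt one_ne_zero
      have hf : fderiv ℝ (E₁ - E₂) v = fderiv ℝ E₁ v - fderiv ℝ E₂ v := fderiv_sub hd1 hd2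
      have h1 := hP1 v hv
      have h2 := hP2 v hv
      have hsum : ∑ i, v i * fderiv ℝ (E₁ - E₂) v (Pi.single i 1)
          = ∑ i, v i * fderiv ℝ E₁ v (Pi.single i 1)
            - ∑ i, v i * fderiv ℝ E₂ v (Pi.single i 1) := by
        rw [← Finset.sum_sub_distrib]
        refine Finset.sum_congr rfl fun i _ => ?_
        rw [hf]; simp; ring
      simp only [Pi.sub_apply, hsum]
      ring_nf
      ring_nf at h1 h2
      linarith
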